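/- Let Ω ⊆ ℕ² be the submonoid generated by a finite set V ⊆ ℕ². Then the lower envelope Env(Ω) = (inf { ℓ : (k, ℓ) ∈ Ω })_k is a uniformly semi-arithmetic sequence in ℕ ∪ {∞}. -/

import Mathlib

noncomputable def Env (Ω : Set (ℕ × ℕ)) (k : ℕ) : ℕ∞ :=
  sInf {x : ℕ∞ | ∃ ℓ : ℕ, (k, ℓ) ∈ Ω ∧ x = (ℓ : ℕ∞)}

def EvArith (a : ℕ → ℕ∞) (d : ℕ) : Prop :=
  ∃ N : ℕ, ∀ k ≥ N, a (k + 1) = a k + (d : ℕ∞)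

def UnifSemiArith (a : ℕ → ℕ∞) (m d : ℕ) : Prop :=
  ∀ n : ℕ, EvArith (fun k => a (m * k + n)) d

lemma env_le {Ω : Set (ℕ × ℕ)} {k ℓ : ℕ} (h : (k, ℓ) ∈ Ω) : Env Ω k ≤ (ℓ : ℕ∞) :=
  sInf_le ⟨ℓ, h, rfl⟩

lemma env_eq_top {Ω : Set (ℕ × ℕ)} {k : ℕ} (h : ∀ ℓ, (k, ℓ) ∉ Ω) : Env Ω k = ⊤ := by
  have : {x : ℕ∞ | ∃ ℓ : ℕ, (k, ℓ) ∈ Ω ∧ x = (ℓ : ℕ∞)} = ∅ := by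
    ext x; simp only [Set.mem_setOf_eq, Set.mem_empty_iff_false, iff_false]
    rintro ⟨ℓ, hℓ, -⟩; exact h ℓ hℓ
  rw [Env, this, sInf_empty]

lemma env_attained {Ω : Set (ℕ × ℕ)} {k ℓ0 : ℕ} (h : (k, ℓ0) ∈ Ω) :
    ∃ ℓ, (k, ℓ) ∈ Ω ∧ Env Ω k = (ℓ : ℕ∞) ∧ ∀ j, (k, j) ∈ Ω → ℓ ≤ j := by
  set S : Set ℕ := {ℓ | (k, ℓ) ∈ Ω} with hS
  have hne : S.Nonempty := ⟨ℓ0, h⟩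
  have hmem : sInf S ∈ S := Nat.sInf_mem hne
  refine ⟨sInf S, hmem, le_antisymm (env_le hmem) ?_, fun j hj => Nat.sInf_le hj⟩
  apply le_sInf
  rintro x ⟨ℓ, hℓ, rfl⟩
  exact_mod_cast Nat.sInf_le hℓ

lemma mem_closure_rep {V : Finset (ℕ × ℕ)} {x : ℕ × ℕ} :
    x ∈ AddSubmonoid.closure (V : Set (ℕ × ℕ)) ↔ ∃ f : ℕ × ℕ → ℕ, ∑ v ∈ V, f v • v = x := by
  rw [← Submodule.span_nat_eq_addSubmonoidClosure, Submodule.mem_toAddSubmonoid]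
  rw [Submodule.mem_span_finset]
  exact ⟨fun ⟨f, _, hf⟩ => ⟨f, hf⟩, fun ⟨f, hf⟩ => ⟨fun v => if v ∈ V then f v else 0,
    fun v hv => by by_contra h; exact hv (if_neg h),
    by rw [← hf]; exact Finset.sum_congr rfl (fun v hv => by simp only [if_pos hv])⟩⟩

theorem stmt_6 (V : Finset (ℕ × ℕ)) :
    ∃ m d : ℕ, 0 < m ∧
      UnifSemiArith (Env (AddSubmonoid.closure (V : Set (ℕ × ℕ)) : Set (ℕ × ℕ))) m d := by
  classical
  set Ω : Set (ℕ × ℕ) := (AddSubmonoid.closure (V : Set (ℕ × ℕ)) : Set (ℕ × ℕ)) with hΩ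
  set F : Finset (ℕ × ℕ) := V.filter (fun v => v.1 ≠ 0) with hFdef
  by_cases hF : F.Nonempty
  · -- main case: some generator has positive first coordinate
    set P : ℕ := ∏ v ∈ F, v.1 with hP
    have hP0 : 0 < P :=
      Finset.prod_pos (fun v hv => Nat.pos_of_ne_zero (Finset.mem_filter.1 hv).2)
    obtain ⟨w0, hw0F, hw0min⟩ := F.exists_min_image (fun v => v.2 * (P / v.1)) hF
    set d : ℕ := w0.2 * (P / w0.1) with hd
    have hw0dvd : w0.1 ∣ P := Finset.dvd_prod_of_mem _ hw0F
    -- (P, d) belongs to Ω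
    have hPd : ((P, d) : ℕ × ℕ) ∈ Ω := by
      have hsm : (P / w0.1) • w0 = ((P, d) : ℕ × ℕ) := by
        have h1 : ((P / w0.1) • w0).1 = P := by
          rw [Prod.smul_fst, smul_eq_mul, Nat.div_mul_cancel hw0dvd]
        have h2 : ((P / w0.1) • w0).2 = d := by
          rw [Prod.smul_snd, smul_eq_mul, hd]
          exact mul_comm _ _
        exact Prod.ext h1 h2
      have hw0mem : w0 ∈ AddSubmonoid.closure (V : Set (ℕ × ℕ)) :=
        AddSubmonoid.subset_closure (s := (V : Set (ℕ × ℕ))) (Finset.mem_filter.1 hw0F).1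
      rw [hΩ, SetLike.mem_coe, ← hsm]
      exact nsmul_mem hw0mem _
    have hup : ∀ k ℓ : ℕ, (k, ℓ) ∈ Ω → (k + P, ℓ + d) ∈ Ω := by
      intro k ℓ h
      have := AddSubmonoid.add_mem _ (by exact h : (k, ℓ) ∈ AddSubmonoid.closure (V : Set (ℕ × ℕ)))
        (by exact hPd : ((P, d) : ℕ × ℕ) ∈ AddSubmonoid.closure (V : Set (ℕ × ℕ)))
      simpa [Prod.mk_add_mk, hΩ] using this
    have hdown : ∀ k ℓ : ℕ, V.card * P ≤ k → (k + P, ℓ) ∈ Ω →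
        ∃ ℓ', (k, ℓ') ∈ Ω ∧ ℓ' + d ≤ ℓ := by
      intro k ℓ hk hmem
      obtain ⟨f, hf⟩ := mem_closure_rep.1 hmem
      have hex : ∃ w ∈ V, w.1 ≠ 0 ∧ P / w.1 ≤ f w := by
        by_contra hcon
        push_neg at hcon
        have hbound : ∀ v ∈ V, f v * v.1 ≤ P - 1 := by
          intro v hv
          rcases eq_or_ne v.1 0 with h0 | h0
          · simp [h0]
          · have hlt : f v < P / v.1 := hcon v hv h0
            have hdvd : v.1 ∣ P := Finset.dvd_prod_of_mem _ (Finset.mem_filter.2 ⟨hv, h0⟩)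
            have : f v * v.1 < (P / v.1) * v.1 :=
              Nat.mul_lt_mul_of_lt_of_le hlt (le_refl _) (Nat.pos_of_ne_zero h0)
            rw [Nat.div_mul_cancel hdvd] at this
            omega
        have hsum : k + P = ∑ v ∈ V, f v * v.1 := by
          have h1 := congrArg Prod.fst hf
          simp only [Prod.fst_sum, Prod.smul_fst, smul_eq_mul] at h1
          exact h1.symm
        have hle : ∑ v ∈ V, f v * v.1 ≤ ∑ _v ∈ V, (P - 1) :=
          Finset.sum_le_sum hbound
        rw [Finset.sum_const, smul_eq_mul] at hle
        have h2 : V.card * (P - 1) ≤ V.card * P := Nat.mul_le_mul_left _ (by omega)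
        omega
      obtain ⟨w, hwV, hw1, hcw⟩ := hex
      have hdvd : w.1 ∣ P := Finset.dvd_prod_of_mem _ (Finset.mem_filter.2 ⟨hwV, hw1⟩)
      have hcP : P / w.1 * w.1 = P := Nat.div_mul_cancel hdvd
      set y : ℕ × ℕ := (f w - P / w.1) • w + ∑ v ∈ V.erase w, f v • v with hy
      have hymem : y ∈ AddSubmonoid.closure (V : Set (ℕ × ℕ)) := by
        have hwmem : w ∈ AddSubmonoid.closure (V : Set (ℕ × ℕ)) :=
          AddSubmonoid.subset_closure (s := (V : Set (ℕ × ℕ))) hwV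
        refine AddSubmonoid.add_mem _ (nsmul_mem hwmem _) ?_
        exact AddSubmonoid.sum_mem _ (fun v hv =>
          nsmul_mem (AddSubmonoid.subset_closure (s := (V : Set (ℕ × ℕ)))
            (Finset.mem_of_mem_erase hv)) _)
      have hcwy : (P / w.1) • w + y = ((k + P, ℓ) : ℕ × ℕ) := by
        rw [hy, ← add_assoc, ← add_nsmul, Nat.add_sub_cancel' hcw,
          Finset.add_sum_erase V (fun v => f v • v) hwV, hf]
      have h1 : P / w.1 * w.1 + y.1 = k + P := by
        have h := congrArg Prod.fst hcwy
        rw [Prod.fst_add, Prod.smul_fst, smul_eq_mul] at h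
        exact h
      have h2 : P / w.1 * w.2 + y.2 = ℓ := by
        have h := congrArg Prod.snd hcwy
        rw [Prod.snd_add, Prod.smul_snd, smul_eq_mul] at h
        exact h
      have hy1 : y.1 = k := by
        rw [hcP] at h1; omega
      refine ⟨y.2, ?_, ?_⟩
      · have hky : ((k, y.2) : ℕ × ℕ) = y := by
          rw [← hy1]
        rw [hΩ, SetLike.mem_coe, hky]; exact hymem
      · have hdc : d ≤ P / w.1 * w.2 := by
          rw [mul_comm]
          exact hw0min w (Finset.mem_filter.2 ⟨hwV, hw1⟩)
        calc y.2 + d ≤ y.2 + P / w.1 * w.2 := Nat.add_le_add_left hdc _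
          _ = P / w.1 * w.2 + y.2 := Nat.add_comm _ _
          _ = ℓ := h2
    have hper : ∀ k : ℕ, V.card * P ≤ k → Env Ω (k + P) = Env Ω k + (d : ℕ∞) := by
      intro k hk
      by_cases hE : ∃ ℓ, (k, ℓ) ∈ Ω
      · obtain ⟨ℓ0, hℓ0⟩ := hE
        obtain ⟨ℓ1, h1mem, h1eq, h1min⟩ := env_attained hℓ0
        have hup1 : (k + P, ℓ1 + d) ∈ Ω := hup _ _ h1mem
        obtain ⟨ℓ2, h2mem, h2eq, h2min⟩ := env_attained hup1
        obtain ⟨ℓ', hℓ'mem, hℓ'le⟩ := hdown k ℓ2 hk h2mem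
        have heq : ℓ2 = ℓ1 + d := by
          have ha := h2min _ hup1
          have hb := h1min _ hℓ'mem
          omega
        rw [h2eq, h1eq, heq, Nat.cast_add]
      · push_neg at hE
        have hE2 : ∀ ℓ, (k + P, ℓ) ∉ Ω := by
          intro ℓ hℓ
          obtain ⟨ℓ', hm, -⟩ := hdown k ℓ hk hℓ
          exact hE _ hm
        rw [env_eq_top hE, env_eq_top hE2, top_add]
    refine ⟨P, d, hP0, fun n => ⟨V.card * P, fun k hk => ?_⟩⟩
    have hkk : k ≤ P * k := Nat.le_mul_of_pos_left _ hP0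
    have harg : P * (k + 1) + n = (P * k + n) + P := by ring
    simp only [harg]
    exact hper _ (by omega)
  · -- degenerate case: every generator is vertical
    have hz : ∀ x ∈ AddSubmonoid.closure (V : Set (ℕ × ℕ)), x.1 = 0 := by
      intro x hx
      induction hx using AddSubmonoid.closure_induction with
      | mem v hv =>
        by_contra hne
        exact hF ⟨v, Finset.mem_filter.2 ⟨hv, hne⟩⟩
      | zero => rfl
      | add a b _ _ ha hb => simp [Prod.fst_add, ha, hb]
    refine ⟨1, 0, one_pos, fun n => ⟨1, fun k hk => ?_⟩⟩
    have htop : ∀ j : ℕ, 1 ≤ j → Env Ω j = ⊤ := by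
      intro j hj
      apply env_eq_top
      intro ℓ hℓ
      have := hz _ hℓ
      simp at this
      omega
    simp only
    rw [htop (1 * (k + 1) + n) (by omega), htop (1 * k + n) (by omega), Nat.cast_zero, add_zero]
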